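/- Let X be a complex Banach space, let Ω be a nonempty bounded open connected subset of ℂ, and let T ∈ B₁(Ω). Then T is strongly irreducible: there is no operator P ∈ B(X) with P² = P, P ≠ 0, P ≠ I and PT = TP. Consequently, σ(T) is a connected subset of ℂ. -/

import Mathlib

set_option linter.unusedSectionVars false
set_option linter.unusedVariables false
set_option maxHeartbeats 1000000

open Set Filter Metric Bornology
set_option linter.unusedSectionVars false
set_option maxHeartbeats 1000000
namespace CDaux

variable {X : Type*} [NormedAddCommGroup X] [NormedSpace ℂ X] [CompleteSpace X]

lemma mem_resolventSet_of_bijective' {E : Type*} [NormedAddCommGroup E] [NormedSpace ℂ E]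
    [CompleteSpace E] (T : E →L[ℂ] E) {μ : ℂ}
    (h : Function.Bijective (T - μ • (1 : E →L[ℂ] E))) : μ ∈ resolventSet ℂ T := by
  rw [spectrum.mem_resolventSet_iff]
  have h1 : IsUnit (T - μ • (1 : E →L[ℂ] E)) := ContinuousLinearMap.isUnit_iff_bijective.2 h
  have h2 : algebraMap ℂ (E →L[ℂ] E) μ - T = -(T - μ • (1 : E →L[ℂ] E)) := by
    rw [Algebra.algebraMap_eq_smul_one, neg_sub]
  rw [h2]
  exact h1.neg

lemma bijective_of_mem_resolventSet' {E : Type*} [NormedAddCommGroup E] [NormedSpace ℂ E]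
    [CompleteSpace E] (T : E →L[ℂ] E) {μ : ℂ}
    (h : μ ∈ resolventSet ℂ T) : Function.Bijective (T - μ • (1 : E →L[ℂ] E)) := by
  rw [spectrum.mem_resolventSet_iff] at h
  have h2 : algebraMap ℂ (E →L[ℂ] E) μ - T = -(T - μ • (1 : E →L[ℂ] E)) := by
    rw [Algebra.algebraMap_eq_smul_one, neg_sub]
  rw [h2] at h
  exact ContinuousLinearMap.isUnit_iff_bijective.1 (by simpa using h.neg)

/-- restriction of `T` to the kernel of a commuting operator `E`. -/
noncomputable def kerRes (T E : X →L[ℂ] X) (hET : ∀ x, E (T x) = T (E x)) :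
    (LinearMap.ker (E : X →ₗ[ℂ] X)) →L[ℂ] (LinearMap.ker (E : X →ₗ[ℂ] X)) :=
  ContinuousLinearMap.codRestrict (T.comp (LinearMap.ker (E : X →ₗ[ℂ] X)).subtypeL) (LinearMap.ker (E : X →ₗ[ℂ] X))
    (fun x => by
      have hx : E (x : X) = 0 := x.2
      simp only [LinearMap.mem_ker, ContinuousLinearMap.coe_comp',
        Function.comp_apply, Submodule.coe_subtypeL', Submodule.coe_subtype,
        ContinuousLinearMap.coe_coe]
      rw [hET, hx, map_zero])

lemma kerRes_sub_apply (T E : X →L[ℂ] X) (hET : ∀ x, E (T x) = T (E x)) (μ : ℂ)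
    (x : LinearMap.ker (E : X →ₗ[ℂ] X)) :
    (((kerRes T E hET - μ • (1 : LinearMap.ker (E : X →ₗ[ℂ] X) →L[ℂ] LinearMap.ker (E : X →ₗ[ℂ] X))) x : LinearMap.ker (E : X →ₗ[ℂ] X)) : X)
      = (T - μ • (1 : X →L[ℂ] X)) (x : X) := by
  simp [kerRes, ContinuousLinearMap.sub_apply, ContinuousLinearMap.smul_apply,
    ContinuousLinearMap.one_apply]


lemma comm_sub (T E : X →L[ℂ] X) (hET : ∀ x, E (T x) = T (E x)) (μ : ℂ) (x : X) :
    (T - μ • (1 : X →L[ℂ] X)) (E x) = E ((T - μ • (1 : X →L[ℂ] X)) x) := by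
  simp only [ContinuousLinearMap.sub_apply, ContinuousLinearMap.smul_apply,
    ContinuousLinearMap.one_apply, map_sub, map_smul, hET]

lemma mem_res_kerRes (T E : X →L[ℂ] X) (hE2 : ∀ x, E (E x) = E x)
    (hET : ∀ x, E (T x) = T (E x)) (μ : ℂ)
    (hsurj : Function.Surjective (T - μ • (1 : X →L[ℂ] X)))
    (hker : ∀ x : X, (T - μ • (1 : X →L[ℂ] X)) x = 0 → E x = 0 → x = 0) :
    μ ∈ resolventSet ℂ (kerRes T E hET) := by
  haveI : CompleteSpace (LinearMap.ker (E : X →ₗ[ℂ] X)) := (ContinuousLinearMap.isClosed_ker E).completeSpace_coe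
  apply mem_resolventSet_of_bijective'
  constructor
  · intro a b hab
    have h1 : (T - μ • (1 : X →L[ℂ] X)) ((a : X) - b) = 0 := by
      have : (((kerRes T E hET - μ • 1) a : LinearMap.ker (E : X →ₗ[ℂ] X)) : X)
          = (((kerRes T E hET - μ • 1) b : LinearMap.ker (E : X →ₗ[ℂ] X)) : X) := by rw [hab]
      rw [kerRes_sub_apply, kerRes_sub_apply] at this
      rw [map_sub, this, sub_self]
    have h2 : E ((a : X) - b) = 0 := by
      rw [map_sub, show E (a : X) = 0 from a.2, show E (b : X) = 0 from b.2, sub_self]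
    have := hker _ h1 h2
    exact Subtype.ext (sub_eq_zero.1 this)
  · intro y
    obtain ⟨x, hx⟩ := hsurj (y : X)
    have hmem : x - E x ∈ LinearMap.ker (E : X →ₗ[ℂ] X) := by
      simp only [LinearMap.mem_ker, ContinuousLinearMap.coe_coe, map_sub, hE2, sub_self]
    refine ⟨⟨x - E x, hmem⟩, Subtype.ext ?_⟩
    rw [kerRes_sub_apply]
    have hy : E (y : X) = 0 := y.2
    calc (T - μ • (1 : X →L[ℂ] X)) (x - E x)
        = (T - μ • (1 : X →L[ℂ] X)) x - (T - μ • (1 : X →L[ℂ] X)) (E x) := map_sub _ _ _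
      _ = (y : X) := by rw [comm_sub T E hET, hx, hy, sub_zero]

lemma fixed_of_res (T E : X →L[ℂ] X) (hE2 : ∀ x, E (E x) = E x)
    (hET : ∀ x, E (T x) = T (E x)) (μ : ℂ)
    (hres : μ ∈ resolventSet ℂ (kerRes T E hET)) :
    ∀ x : X, (T - μ • (1 : X →L[ℂ] X)) x = 0 → x = E x := by
  haveI : CompleteSpace (LinearMap.ker (E : X →ₗ[ℂ] X)) := (ContinuousLinearMap.isClosed_ker E).completeSpace_coe
  have hbij := bijective_of_mem_resolventSet' _ hres
  intro x hx
  have hmem : x - E x ∈ LinearMap.ker (E : X →ₗ[ℂ] X) := by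
    simp only [LinearMap.mem_ker, ContinuousLinearMap.coe_coe, map_sub, hE2, sub_self]
  set w : LinearMap.ker (E : X →ₗ[ℂ] X) := ⟨x - E x, hmem⟩ with hw
  have hzero : (kerRes T E hET - μ • 1) w = 0 := by
    apply Subtype.ext
    rw [kerRes_sub_apply]
    show (T - μ • (1 : X →L[ℂ] X)) (x - E x) = 0
    rw [map_sub, hx, comm_sub T E hET, hx, map_zero, sub_zero]
  have : w = 0 := by
    apply hbij.1
    rw [hzero, map_zero]
  have := congrArg (Subtype.val) this
  exact sub_eq_zero.1 this

lemma isOpen_res {E : Type*} [NormedAddCommGroup E] [NormedSpace ℂ E] [CompleteSpace E]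
    (S : E →L[ℂ] E) : IsOpen (resolventSet ℂ S) := spectrum.isOpen_resolventSet S

lemma exists_gen (T : X →L[ℂ] X) (μ : ℂ)
    (hfin : Module.finrank ℂ (LinearMap.ker ((T - μ • (1 : X →L[ℂ] X) : X →ₗ[ℂ] X))) = 1) :
    ∃ v : X, v ≠ 0 ∧ (T - μ • (1 : X →L[ℂ] X)) v = 0 ∧
      ∀ w, (T - μ • (1 : X →L[ℂ] X)) w = 0 → ∃ c : ℂ, w = c • v := by
  rw [finrank_eq_one_iff'] at hfin
  obtain ⟨v, hv0, hgen⟩ := hfin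
  refine ⟨(v : X), ?_, LinearMap.mem_ker.1 v.2, ?_⟩
  · intro h
    exact hv0 (Subtype.ext h)
  · intro w hw
    obtain ⟨c, hc⟩ := hgen ⟨w, LinearMap.mem_ker.2 hw⟩
    exact ⟨c, (congrArg Subtype.val hc).symm⟩

lemma part1 (Ω : Set ℂ) (hconn : IsPreconnected Ω) (T : X →L[ℂ] X)
    (hdens : (Submodule.span ℂ
      (⋃ μ ∈ Ω, ((LinearMap.ker ((T - μ • (1 : X →L[ℂ] X) : X →ₗ[ℂ] X)) : Submodule ℂ X) : Set X))
      ).topologicalClosure = ⊤)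
    (hsurj : ∀ μ ∈ Ω, Function.Surjective (T - μ • (1 : X →L[ℂ] X)))
    (hfin : ∀ μ ∈ Ω, Module.finrank ℂ (LinearMap.ker ((T - μ • (1 : X →L[ℂ] X) : X →ₗ[ℂ] X))) = 1) :
    ¬ ∃ P : X →L[ℂ] X, P * P = P ∧ P ≠ 0 ∧ P ≠ 1 ∧ P * T = T * P := by
  rintro ⟨P, hP2, hP0, hP1, hPT⟩
  have hP2' : ∀ x, P (P x) = P x := fun x => by
    conv_lhs => rw [← ContinuousLinearMap.mul_apply, hP2]
  have hPT' : ∀ x, P (T x) = T (P x) := fun x => by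
    rw [← ContinuousLinearMap.mul_apply, ← ContinuousLinearMap.mul_apply, hPT]
  set Q : X →L[ℂ] X := 1 - P with hQdef
  have hQapp : ∀ x, Q x = x - P x := fun x => by
    simp [hQdef, ContinuousLinearMap.sub_apply]
  have hQ2' : ∀ x, Q (Q x) = Q x := by
    intro x
    have h1 : P (Q x) = 0 := by rw [hQapp, map_sub, hP2', sub_self]
    rw [hQapp (Q x), h1, sub_zero]
  have hQT' : ∀ x, Q (T x) = T (Q x) := by
    intro x
    rw [hQapp, hQapp, map_sub T, hPT']
  haveI hcP : CompleteSpace (LinearMap.ker (P : X →ₗ[ℂ] X)) := (ContinuousLinearMap.isClosed_ker P).completeSpace_coe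
  haveI hcQ : CompleteSpace (LinearMap.ker (Q : X →ₗ[ℂ] X)) := (ContinuousLinearMap.isClosed_ker Q).completeSpace_coe
  set u := resolventSet ℂ (kerRes T P hPT') with hu
  set v := resolventSet ℂ (kerRes T Q hQT') with hv
  have hdichot : ∀ μ ∈ Ω, μ ∈ u ∪ v := by
    intro μ hμ
    obtain ⟨w, hw0, hwker, hwgen⟩ := exists_gen T μ (hfin μ hμ)
    by_cases hPw : P w = 0
    · right
      apply mem_res_kerRes T Q hQ2' hQT' μ (hsurj μ hμ)
      intro x hx hQx
      obtain ⟨c, rfl⟩ := hwgen x hx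
      have h2 : P (c • w) = 0 := by rw [map_smul, hPw, smul_zero]
      have hx2 : c • w = P (c • w) := by
        have h3 := hQx
        rw [hQapp] at h3
        exact sub_eq_zero.1 h3
      rw [hx2, h2]
    · left
      apply mem_res_kerRes T P hP2' hPT' μ (hsurj μ hμ)
      intro x hx hPx
      obtain ⟨c, rfl⟩ := hwgen x hx
      rw [map_smul] at hPx
      rcases smul_eq_zero.1 hPx with h | h
      · rw [h, zero_smul]
      · exact absurd h hPw
  have hnotboth : ∀ μ ∈ Ω, ¬(μ ∈ u ∧ μ ∈ v) := by
    rintro μ hμ ⟨h1, h2⟩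
    obtain ⟨w, hw0, hwker, -⟩ := exists_gen T μ (hfin μ hμ)
    have e1 := fixed_of_res T P hP2' hPT' μ h1 w hwker
    have e2 := fixed_of_res T Q hQ2' hQT' μ h2 w hwker
    rw [hQapp] at e2
    have hPw : P w = 0 := by
      have h3 : w - P w = w := e2.symm
      rwa [sub_eq_self] at h3
    exact hw0 (e1.trans hPw)
  have hou : IsOpen u := isOpen_res (kerRes T P hPT')
  have hov : IsOpen v := isOpen_res (kerRes T Q hQT')
  have hcover : Ω ⊆ u ∪ v := fun μ hμ => hdichot μ hμ
  have hcases : ¬((Ω ∩ u).Nonempty ∧ (Ω ∩ v).Nonempty) := by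
    rintro ⟨h1, h2⟩
    obtain ⟨μ, hμΩ, hμuv⟩ := hconn u v hou hov hcover h1 h2
    exact hnotboth μ hμΩ ⟨hμuv.1, hμuv.2⟩
  rcases not_and_or.1 hcases with h | h
  · have hall : ∀ μ ∈ Ω, μ ∈ v := fun μ hμ =>
      (hdichot μ hμ).resolve_left (fun hh => h ⟨μ, hμ, hh⟩)
    have hsub : Submodule.span ℂ
        (⋃ μ ∈ Ω, ((LinearMap.ker ((T - μ • (1 : X →L[ℂ] X) : X →ₗ[ℂ] X)) : Submodule ℂ X) : Set X))
        ≤ LinearMap.ker (P : X →ₗ[ℂ] X) := by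
      rw [Submodule.span_le]
      intro x hx
      simp only [Set.mem_iUnion] at hx
      obtain ⟨μ, hμ, hxk⟩ := hx
      have hxker : (T - μ • (1 : X →L[ℂ] X)) x = 0 := LinearMap.mem_ker.1 (SetLike.mem_coe.1 hxk)
      have h5 := fixed_of_res T Q hQ2' hQT' μ (hall μ hμ) x hxker
      rw [hQapp] at h5
      have hPx : P x = 0 := by
        have h6 : x - P x = x := h5.symm
        rwa [sub_eq_self] at h6
      exact SetLike.mem_coe.2 (LinearMap.mem_ker.2 hPx)
    have htop : (⊤ : Submodule ℂ X) ≤ LinearMap.ker (P : X →ₗ[ℂ] X) := by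
      rw [← hdens]
      exact Submodule.topologicalClosure_minimal _ hsub (ContinuousLinearMap.isClosed_ker P)
    refine hP0 ?_
    ext x
    simpa using LinearMap.mem_ker.1 (htop Submodule.mem_top)
  · have hall : ∀ μ ∈ Ω, μ ∈ u := fun μ hμ =>
      (hdichot μ hμ).resolve_right (fun hh => h ⟨μ, hμ, hh⟩)
    have hsub : Submodule.span ℂ
        (⋃ μ ∈ Ω, ((LinearMap.ker ((T - μ • (1 : X →L[ℂ] X) : X →ₗ[ℂ] X)) : Submodule ℂ X) : Set X))
        ≤ LinearMap.ker (Q : X →ₗ[ℂ] X) := by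
      rw [Submodule.span_le]
      intro x hx
      simp only [Set.mem_iUnion] at hx
      obtain ⟨μ, hμ, hxk⟩ := hx
      have hxker : (T - μ • (1 : X →L[ℂ] X)) x = 0 := LinearMap.mem_ker.1 (SetLike.mem_coe.1 hxk)
      have h5 := fixed_of_res T P hP2' hPT' μ (hall μ hμ) x hxker
      have hQx : Q x = 0 := by rw [hQapp, ← h5, sub_self]
      exact SetLike.mem_coe.2 (LinearMap.mem_ker.2 hQx)
    have htop : (⊤ : Submodule ℂ X) ≤ LinearMap.ker (Q : X →ₗ[ℂ] X) := by
      rw [← hdens]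
      exact Submodule.topologicalClosure_minimal _ hsub (ContinuousLinearMap.isClosed_ker Q)
    have hQzero : Q = 0 := by
      ext x
      simpa using LinearMap.mem_ker.1 (htop Submodule.mem_top)
    rw [hQdef] at hQzero
    exact hP1 (sub_eq_zero.1 hQzero).symm

lemma core (Ω : Set ℂ) (T : X →L[ℂ] X)
    (hdens : (Submodule.span ℂ
      (⋃ μ ∈ Ω, ((LinearMap.ker ((T - μ • (1 : X →L[ℂ] X) : X →ₗ[ℂ] X)) : Submodule ℂ X) : Set X))
      ).topologicalClosure = ⊤)
    (K₁ K₂ : Set ℂ) (hcl₁ : IsClosed K₁) (hcp₂ : IsCompact K₂)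
    (hdisj : Disjoint K₁ K₂) (hσ : spectrum ℂ T = K₁ ∪ K₂) (hΩ : Ω ⊆ K₁) :
    K₂ = ∅ := by
  by_contra hne2
  obtain ⟨μ₀, hμ₀K₂⟩ := Set.nonempty_iff_ne_empty.2 hne2
  have hμ₀σ : μ₀ ∈ spectrum ℂ T := by rw [hσ]; exact Or.inr hμ₀K₂
  obtain ⟨δ, hδpos, hthick⟩ := (hdisj.symm).exists_thickenings hcp₂ hcl₁
  set D : Set ℂ := Metric.thickening (δ/2) K₂ with hD
  set D2 : Set ℂ := Metric.thickening (3*δ/4) K₂ with hD2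
  have hK₂D : K₂ ⊆ D := Metric.self_subset_thickening (by positivity) K₂
  have hDD2 : D ⊆ D2 := Metric.thickening_mono (by linarith) K₂
  have hclD2 : closure D ⊆ D2 :=
    (Metric.closure_thickening_subset_cthickening (δ/2) K₂).trans
      (Metric.cthickening_subset_thickening' (by positivity) (by linarith) K₂)
  have hD2K₁ : ∀ μ ∈ D2, μ ∉ K₁ := by
    intro μ h1 h2
    exact Set.disjoint_left.1 hthick (Metric.thickening_mono (by linarith) K₂ h1)
      (Metric.self_subset_thickening hδpos K₁ h2)
  have hDopen : IsOpen D := Metric.isOpen_thickening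
  have hDbdd : IsBounded D :=
    ((hcp₂.isBounded).cthickening).subset (Metric.thickening_subset_cthickening _ _)
  have hres_iff : ∀ z : ℂ, z ∉ spectrum ℂ T ↔ z ∈ resolventSet ℂ T := fun z =>
    Set.notMem_compl_iff
  have hDρ : ∀ μ ∈ D, μ ∉ K₂ → μ ∈ resolventSet ℂ T := by
    intro μ hDmem hK2mem
    refine (hres_iff μ).1 ?_
    intro hσμ
    rw [hσ] at hσμ
    rcases hσμ with h | h
    · exact hD2K₁ μ (hDD2 hDmem) h
    · exact hK2mem h
  have hfrρ : ∀ μ ∈ frontier D, μ ∈ resolventSet ℂ T := by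
    intro μ hμ
    have hμcl : μ ∈ closure D := frontier_subset_closure hμ
    have hμnD : μ ∉ D := by
      rw [hDopen.frontier_eq] at hμ
      exact hμ.2
    refine (hres_iff μ).1 ?_
    intro hσμ
    rw [hσ] at hσμ
    rcases hσμ with h | h
    · exact hD2K₁ μ (hclD2 hμcl) h
    · exact hμnD (hK₂D h)
  set Rf : ℂ → (X →L[ℂ] X) := fun z => Ring.inverse (algebraMap ℂ (X →L[ℂ] X) z - T) with hRf
  have hRcont : ContinuousOn Rf (resolventSet ℂ T) := by
    intro z hz
    have hu : IsUnit (algebraMap ℂ (X →L[ℂ] X) z - T) := spectrum.mem_resolventSet_iff.1 hz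
    have h1 : ContinuousAt (fun w : ℂ => algebraMap ℂ (X →L[ℂ] X) w - T) z :=
      ((continuous_algebraMap ℂ (X →L[ℂ] X)).sub continuous_const).continuousAt
    have h2 : ContinuousAt Ring.inverse (algebraMap ℂ (X →L[ℂ] X) z - T) := by
      have := NormedRing.inverse_continuousAt hu.unit
      rwa [IsUnit.unit_spec] at this
    have h3 : ContinuousAt (fun w : ℂ => Ring.inverse (algebraMap ℂ (X →L[ℂ] X) w - T)) z :=
      ContinuousAt.comp (g := Ring.inverse)
        (f := fun w : ℂ => algebraMap ℂ (X →L[ℂ] X) w - T) (x := z) h2 h1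
    exact h3.continuousWithinAt
  have hfrcomp : IsCompact (frontier D) :=
    Metric.isCompact_of_isClosed_isBounded isClosed_frontier
      ((hDbdd.closure).subset frontier_subset_closure)
  obtain ⟨M₀, hM₀⟩ := hfrcomp.exists_bound_of_continuousOn (hRcont.mono hfrρ)
  set M : ℝ := max M₀ 0 with hMdef
  have hM0 : (0:ℝ) ≤ M := le_max_right _ _
  have hresM : ∀ z ∈ frontier D, ∀ w x : X, (T - z • (1 : X →L[ℂ] X)) w = x → ‖w‖ ≤ M * ‖x‖ := by
    intro z hz w x hwx
    have hzρ := hfrρ z hz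
    have hu := spectrum.mem_resolventSet_iff.1 hzρ
    have h1 : Rf z * (algebraMap ℂ (X →L[ℂ] X) z - T) = 1 := Ring.inverse_mul_cancel _ hu
    have h2 : w = Rf z (-x) := by
      calc w = (1 : X →L[ℂ] X) w := (ContinuousLinearMap.one_apply w).symm
        _ = (Rf z * (algebraMap ℂ (X →L[ℂ] X) z - T)) w := by rw [h1]
        _ = Rf z ((algebraMap ℂ (X →L[ℂ] X) z - T) w) := ContinuousLinearMap.mul_apply _ _ _
        _ = Rf z (-x) := by
            congr 1
            rw [Algebra.algebraMap_eq_smul_one, ← neg_sub T (z • (1 : X →L[ℂ] X)),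
              ContinuousLinearMap.neg_apply, hwx]
    rw [h2]
    calc ‖Rf z (-x)‖ ≤ ‖Rf z‖ * ‖-x‖ := ContinuousLinearMap.le_opNorm _ _
      _ = ‖Rf z‖ * ‖x‖ := by rw [norm_neg]
      _ ≤ M * ‖x‖ :=
        mul_le_mul_of_nonneg_right ((hM₀ z hz).trans (le_max_left _ _)) (norm_nonneg x)
  have hbound : ∀ (x : X) (g : ℂ → X), DifferentiableOn ℂ g D2 →
      (∀ μ ∈ D2, (T - μ • (1 : X →L[ℂ] X)) (g μ) = x) →
      ∀ μ ∈ closure D, ‖g μ‖ ≤ M * ‖x‖ := by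
    intro x g hgd hge μ hμ
    refine Complex.norm_le_of_forall_mem_frontier_norm_le hDbdd
      ⟨hgd.mono hDD2, (hgd.continuousOn).mono hclD2⟩ ?_ hμ
    intro z hz
    exact hresM z hz (g z) x (hge z (hclD2 (frontier_subset_closure hz)))
  let W : Submodule ℂ X :=
    { carrier := {x : X | ∃ g : ℂ → X, DifferentiableOn ℂ g D2 ∧
        ∀ μ ∈ D2, (T - μ • (1 : X →L[ℂ] X)) (g μ) = x}
      add_mem' := by
        rintro a b ⟨ga, hga, hga2⟩ ⟨gb, hgb, hgb2⟩
        exact ⟨fun μ => ga μ + gb μ, hga.add hgb,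
          fun μ hμ => by rw [map_add, hga2 μ hμ, hgb2 μ hμ]⟩
      zero_mem' := ⟨fun _ => 0, differentiableOn_const 0, fun μ _ => map_zero _⟩
      smul_mem' := by
        rintro c a ⟨ga, hga, hga2⟩
        exact ⟨fun μ => c • ga μ, hga.const_smul c,
          fun μ hμ => by rw [map_smul, hga2 μ hμ]⟩ }
  have hspanW : Submodule.span ℂ
      (⋃ μ ∈ Ω, ((LinearMap.ker ((T - μ • (1 : X →L[ℂ] X) : X →ₗ[ℂ] X)) : Submodule ℂ X) : Set X)) ≤ W := by
    rw [Submodule.span_le]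
    intro x hx
    simp only [Set.mem_iUnion] at hx
    obtain ⟨lam, hlam, hxk⟩ := hx
    have hxker : (T - lam • (1 : X →L[ℂ] X)) x = 0 := LinearMap.mem_ker.1 (SetLike.mem_coe.1 hxk)
    have hlamD2 : lam ∉ D2 := fun hmem => hD2K₁ lam hmem (hΩ hlam)
    refine ⟨fun μ => (lam - μ)⁻¹ • x, ?_, ?_⟩
    · apply DifferentiableOn.smul_const
      apply DifferentiableOn.inv
      · exact (differentiableOn_const lam).sub differentiableOn_id
      · intro μ hμ
        exact sub_ne_zero.2 (fun hlm => hlamD2 (by rw [hlm]; exact hμ))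
    · intro μ hμ
      have hne : lam - μ ≠ 0 := sub_ne_zero.2 (fun hlm => hlamD2 (by rw [hlm]; exact hμ))
      rw [map_smul]
      have h7 : (T - μ • (1 : X →L[ℂ] X)) x = (lam - μ) • x := by
        have h8 : (T - μ • (1 : X →L[ℂ] X)) x
            = (T - lam • (1 : X →L[ℂ] X)) x + (lam - μ) • x := by
          simp only [ContinuousLinearMap.sub_apply, ContinuousLinearMap.smul_apply,
            ContinuousLinearMap.one_apply, sub_smul]
          abel
        rw [h8, hxker, zero_add]
      rw [h7, smul_smul, inv_mul_cancel₀ hne, one_smul]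
  have hGex : ∀ y : X, ∃ G : ℂ → X, DifferentiableOn ℂ G D ∧
      ∀ μ ∈ closure D, (T - μ • (1 : X →L[ℂ] X)) (G μ) = y := by
    intro y
    have hyc : y ∈ closure (W : Set X) := by
      have h0 : closure ((Submodule.span ℂ
          (⋃ μ ∈ Ω, ((LinearMap.ker ((T - μ • (1 : X →L[ℂ] X) : X →ₗ[ℂ] X)) : Submodule ℂ X) : Set X))
          : Submodule ℂ X) : Set X) = Set.univ := by
        rw [← Submodule.topologicalClosure_coe, hdens]
        rfl
      have h1 : y ∈ closure ((Submodule.span ℂ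
          (⋃ μ ∈ Ω, ((LinearMap.ker ((T - μ • (1 : X →L[ℂ] X) : X →ₗ[ℂ] X)) : Submodule ℂ X) : Set X))
          : Submodule ℂ X) : Set X) := by rw [h0]; trivial
      exact closure_mono (fun z hz => hspanW hz) h1
    obtain ⟨x, hxW, hxy⟩ := mem_closure_iff_seq_limit.1 hyc
    have hxW' : ∀ n, ∃ g : ℂ → X, DifferentiableOn ℂ g D2 ∧
        ∀ μ ∈ D2, (T - μ • (1 : X →L[ℂ] X)) (g μ) = x n := fun n => hxW n
    choose g hg1 hg2 using hxW'
    have hdiffb : ∀ n m : ℕ, ∀ μ ∈ closure D, ‖g n μ - g m μ‖ ≤ M * ‖x n - x m‖ := by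
      intro n m
      apply hbound (x n - x m) (fun μ => g n μ - g m μ) ((hg1 n).sub (hg1 m))
      intro μ hμ
      rw [map_sub, hg2 n μ hμ, hg2 m μ hμ]
    have hcau : ∀ μ ∈ closure D, CauchySeq (fun n => g n μ) := by
      intro μ hμ
      rw [Metric.cauchySeq_iff]
      intro ε hε
      have hxc : CauchySeq x := hxy.cauchySeq
      rw [Metric.cauchySeq_iff] at hxc
      obtain ⟨N, hN⟩ := hxc (ε / (M + 1)) (by positivity)
      refine ⟨N, fun m hm n hn => ?_⟩
      rw [dist_eq_norm]
      calc ‖g m μ - g n μ‖ ≤ M * ‖x m - x n‖ := hdiffb m n μ hμ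
        _ ≤ M * (ε / (M + 1)) := mul_le_mul_of_nonneg_left
            (le_of_lt (by rw [← dist_eq_norm]; exact hN m hm n hn)) hM0
        _ < (M + 1) * (ε / (M + 1)) := mul_lt_mul_of_pos_right (lt_add_one M) (by positivity)
        _ = ε := by field_simp
    have hlim : ∀ μ, μ ∈ closure D → ∃ w : X, Tendsto (fun n => g n μ) atTop (nhds w) :=
      fun μ hμ => cauchySeq_tendsto_of_complete (hcau μ hμ)
    choose! G hG using hlim
    have hkey : ∀ n, ∀ μ ∈ closure D, ‖g n μ - G μ‖ ≤ M * ‖x n - y‖ := by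
      intro n μ hμ
      have t1 : Tendsto (fun m => ‖g n μ - g m μ‖) atTop (nhds ‖g n μ - G μ‖) :=
        (Filter.Tendsto.sub tendsto_const_nhds (hG μ hμ)).norm
      have t2 : Tendsto (fun m => M * ‖x n - x m‖) atTop (nhds (M * ‖x n - y‖)) :=
        tendsto_const_nhds.mul (Filter.Tendsto.sub tendsto_const_nhds hxy).norm
      exact le_of_tendsto_of_tendsto' t1 t2 (fun m => hdiffb n m μ hμ)
    refine ⟨G, ?_, ?_⟩
    · have huc : TendstoUniformlyOn (fun n μ => g n μ) G atTop D := by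
        rw [Metric.tendstoUniformlyOn_iff]
        intro ε hε
        have h1 : Tendsto (fun n => M * ‖x n - y‖) atTop (nhds 0) := by
          have h2 : Tendsto (fun n => ‖x n - y‖) atTop (nhds 0) :=
            tendsto_iff_norm_sub_tendsto_zero.1 hxy
          simpa using tendsto_const_nhds.mul h2
        have h2 : ∀ᶠ n in atTop, M * ‖x n - y‖ < ε := h1.eventually_lt_const hε
        filter_upwards [h2] with n hn
        intro μ hμ
        rw [dist_comm, dist_eq_norm]
        exact lt_of_le_of_lt (hkey n μ (subset_closure hμ)) hn
      exact huc.tendstoLocallyUniformlyOn.differentiableOn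
        (Filter.Eventually.of_forall (fun n => (hg1 n).mono hDD2)) hDopen
    · intro μ hμ
      have t1 : Tendsto (fun n => (T - μ • (1 : X →L[ℂ] X)) (g n μ)) atTop
          (nhds ((T - μ • (1 : X →L[ℂ] X)) (G μ))) :=
        ((T - μ • (1 : X →L[ℂ] X)).continuous.tendsto _).comp (hG μ hμ)
      have t2 : ∀ n, (T - μ • (1 : X →L[ℂ] X)) (g n μ) = x n := fun n => hg2 n μ (hclD2 hμ)
      simp only [t2] at t1
      exact tendsto_nhds_unique t1 hxy
  have hμ₀D : μ₀ ∈ D := hK₂D hμ₀K₂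
  have hsurj2 : Function.Surjective (T - μ₀ • (1 : X →L[ℂ] X)) := by
    intro y
    obtain ⟨G, hGd, hGe⟩ := hGex y
    exact ⟨G μ₀, hGe μ₀ (subset_closure hμ₀D)⟩
  have hinj2 : Function.Injective (T - μ₀ • (1 : X →L[ℂ] X)) := by
    intro a b hab
    rw [← sub_eq_zero]
    set v : X := a - b with hvdef
    have hv : (T - μ₀ • (1 : X →L[ℂ] X)) v = 0 := by rw [map_sub, hab, sub_self]
    obtain ⟨G, hGd, hGe⟩ := hGex v
    set D₀ : Set ℂ := connectedComponentIn D μ₀ with hD₀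
    have hD₀open : IsOpen D₀ := hDopen.connectedComponentIn
    have hD₀pre : IsPreconnected D₀ := isPreconnected_connectedComponentIn
    have hμ₀D₀ : μ₀ ∈ D₀ := mem_connectedComponentIn hμ₀D
    have hD₀D : D₀ ⊆ D := connectedComponentIn_subset _ _
    have hnsub : ¬(D₀ ⊆ K₂) := by
      intro hsub
      have hcl : IsClosed D₀ := by
        rw [← closure_subset_iff_isClosed]
        intro p hp
        have hpK₂ : p ∈ K₂ := (IsClosed.closure_subset_iff hcp₂.isClosed).2 hsub hp
        have hpD : p ∈ D := hK₂D hpK₂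
        have hpre : IsPreconnected (insert p D₀) :=
          hD₀pre.subset_closure (Set.subset_insert p D₀)
            (Set.insert_subset_iff.2 ⟨hp, subset_closure⟩)
        have hsub2 : insert p D₀ ⊆ connectedComponentIn D μ₀ :=
          hpre.subset_connectedComponentIn (Set.mem_insert_of_mem p hμ₀D₀)
            (Set.insert_subset_iff.2 ⟨hpD, hD₀D⟩)
        exact hsub2 (Set.mem_insert p D₀)
      have huniv : D₀ = Set.univ := IsClopen.eq_univ ⟨hcl, hD₀open⟩ ⟨μ₀, hμ₀D₀⟩
      have hbu : IsBounded (Set.univ : Set ℂ) := (hcp₂.isBounded).subset (huniv ▸ hsub)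
      exact NormedSpace.unbounded_univ ℂ ℂ hbu
    obtain ⟨μ₁, hμ₁D₀, hμ₁K₂⟩ := Set.not_subset.1 hnsub
    have hUo : IsOpen (D₀ \ K₂) := hD₀open.sdiff hcp₂.isClosed
    have heq : Set.EqOn (fun μ => (μ₀ - μ) • G μ) (fun _ => v) (D₀ \ K₂) := by
      rintro μ ⟨hμD₀, hμK₂⟩
      have hμρ := hDρ μ (hD₀D hμD₀) hμK₂
      have hsub0 : μ₀ - μ ≠ 0 := sub_ne_zero.2 (fun hmm => hμK₂ (hmm ▸ hμ₀K₂))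
      have hbijμ := bijective_of_mem_resolventSet' T hμρ
      have e1 : (T - μ • (1 : X →L[ℂ] X)) (G μ) = v := hGe μ (subset_closure (hD₀D hμD₀))
      have e2 : (T - μ • (1 : X →L[ℂ] X)) ((μ₀ - μ)⁻¹ • v) = v := by
        have h9 : (T - μ • (1 : X →L[ℂ] X)) v = (μ₀ - μ) • v := by
          have h8 : (T - μ • (1 : X →L[ℂ] X)) v
              = (T - μ₀ • (1 : X →L[ℂ] X)) v + (μ₀ - μ) • v := by
            simp only [ContinuousLinearMap.sub_apply, ContinuousLinearMap.smul_apply,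
              ContinuousLinearMap.one_apply, sub_smul]
            abel
          rw [h8, hv, zero_add]
        rw [map_smul, h9, smul_smul, inv_mul_cancel₀ hsub0, one_smul]
      have e3 : G μ = (μ₀ - μ)⁻¹ • v := hbijμ.1 (e1.trans e2.symm)
      show (μ₀ - μ) • G μ = v
      rw [e3, smul_smul, mul_inv_cancel₀ hsub0, one_smul]
    have hHa : AnalyticOnNhd ℂ (fun μ => (μ₀ - μ) • G μ) D₀ := by
      have hd : DifferentiableOn ℂ (fun μ => (μ₀ - μ) • G μ) D :=
        ((differentiableOn_const μ₀).sub differentiableOn_id).smul hGd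
      exact (hd.analyticOnNhd hDopen).mono hD₀D
    have hCa : AnalyticOnNhd ℂ (fun _ : ℂ => v) D₀ := analyticOnNhd_const
    have hev : (fun μ => (μ₀ - μ) • G μ) =ᶠ[nhds μ₁] (fun _ => v) :=
      Filter.eventuallyEq_of_mem (hUo.mem_nhds ⟨hμ₁D₀, hμ₁K₂⟩) heq
    have hEq := hHa.eqOn_of_preconnected_of_eventuallyEq hCa hD₀pre hμ₁D₀ hev
    have hfin := hEq hμ₀D₀
    simp only [sub_self, zero_smul] at hfin
    exact hfin.symm
  have hmemres := mem_resolventSet_of_bijective' T ⟨hinj2, hsurj2⟩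
  exact absurd hμ₀σ ((hres_iff μ₀).2 hmemres |> fun h => h)

end CDaux



/-- The Cowen–Douglas class `B₁(Ω)`: `Ω ⊆ σ(T)`; the closed linear span of
`⋃_{λ∈Ω} ker(T − λ)` is all of `X`; `T − λ` is surjective for every `λ ∈ Ω`; and
`dim ker(T − λ) = 1` for every `λ ∈ Ω`. -/
def MemCowenDouglasOne {X : Type*} [NormedAddCommGroup X] [NormedSpace ℂ X]
    (Ω : Set ℂ) (T : X →L[ℂ] X) : Prop :=
  Ω ⊆ spectrum ℂ T ∧
  (Submodule.span ℂ
      (⋃ μ ∈ Ω, ((LinearMap.ker ((T - μ • (1 : X →L[ℂ] X) : X →ₗ[ℂ] X)) : Submodule ℂ X) : Set X))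
    ).topologicalClosure = ⊤ ∧
  (∀ μ ∈ Ω, Function.Surjective (T - μ • (1 : X →L[ℂ] X))) ∧
  (∀ μ ∈ Ω, Module.finrank ℂ (LinearMap.ker ((T - μ • (1 : X →L[ℂ] X) : X →ₗ[ℂ] X))) = 1)

/-- If `Ω` is a nonempty bounded open connected subset of `ℂ` and
`T ∈ B₁(Ω)`, then `T` is strongly irreducible: no nontrivial idempotent commutes with
`T`. Consequently, `σ(T)` is a connected subset of `ℂ`. -/
theorem stronglyIrreducible_and_connected_spectrum_of_cowenDouglas
    (X : Type*) [NormedAddCommGroup X] [NormedSpace ℂ X] [CompleteSpace X]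
    (Ω : Set ℂ) (hne : Ω.Nonempty) (hbd : Bornology.IsBounded Ω) (hop : IsOpen Ω)
    (hconn : IsConnected Ω)
    (T : X →L[ℂ] X) (hT : MemCowenDouglasOne Ω T) :
    (¬ ∃ P : X →L[ℂ] X, P * P = P ∧ P ≠ 0 ∧ P ≠ 1 ∧ P * T = T * P) ∧
    IsConnected (spectrum ℂ T) := by
  obtain ⟨hΩσ, hdens, hsurj, hfin⟩ := hT
  constructor
  · exact CDaux.part1 Ω hconn.isPreconnected T hdens hsurj hfin
  · constructor
    · obtain ⟨lam0, hlam0⟩ := hne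
      exact ⟨lam0, hΩσ hlam0⟩
    · intro u v hu hv hcov hσu hσv
      by_contra hcon
      rw [Set.not_nonempty_iff_eq_empty] at hcon
      have hnot : ∀ z, z ∉ spectrum ℂ T ∩ (u ∩ v) := Set.eq_empty_iff_forall_notMem.1 hcon
      have hΩuv : Ω ⊆ u ∨ Ω ⊆ v := by
        by_contra hcc
        push_neg at hcc
        obtain ⟨l1, hl1Ω, hl1u⟩ := Set.not_subset.1 hcc.1
        obtain ⟨l2, hl2Ω, hl2v⟩ := Set.not_subset.1 hcc.2
        have hl1v : l1 ∈ v := (hcov (hΩσ hl1Ω)).resolve_left hl1u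
        have hl2u : l2 ∈ u := (hcov (hΩσ hl2Ω)).resolve_right hl2v
        obtain ⟨z, hzΩ, hzu, hzv⟩ := hconn.isPreconnected u v hu hv
          (fun w hw => hcov (hΩσ hw)) ⟨l2, hl2Ω, hl2u⟩ ⟨l1, hl1Ω, hl1v⟩
        exact hnot z ⟨hΩσ hzΩ, hzu, hzv⟩
      rcases hΩuv with hΩu | hΩv
      · have hcl₁ : IsClosed (spectrum ℂ T \ v) := (spectrum.isClosed T).sdiff hv
        have hcl₂ : IsClosed (spectrum ℂ T \ u) := (spectrum.isClosed T).sdiff hu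
        have hcp₂ : IsCompact (spectrum ℂ T \ u) :=
          (spectrum.isCompact T).of_isClosed_subset hcl₂ Set.diff_subset
        have hdisj : Disjoint (spectrum ℂ T \ v) (spectrum ℂ T \ u) := by
          rw [Set.disjoint_left]
          rintro z ⟨hzσ, hzv⟩ ⟨_, hzu⟩
          exact (hcov hzσ).elim hzu hzv
        have hσeq : spectrum ℂ T = (spectrum ℂ T \ v) ∪ (spectrum ℂ T \ u) := by
          ext z
          constructor
          · intro hz
            rcases hcov hz with h | h
            · exact Or.inl ⟨hz, fun hzv => hnot z ⟨hz, h, hzv⟩⟩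
            · exact Or.inr ⟨hz, fun hzu => hnot z ⟨hz, hzu, h⟩⟩
          · rintro (⟨hz, -⟩ | ⟨hz, -⟩) <;> exact hz
        have hΩK₁ : Ω ⊆ spectrum ℂ T \ v :=
          fun w hw => ⟨hΩσ hw, fun hwv => hnot w ⟨hΩσ hw, hΩu hw, hwv⟩⟩
        have h0 := CDaux.core Ω T hdens _ _ hcl₁ hcp₂ hdisj hσeq hΩK₁
        obtain ⟨b, hbσ, hbv'⟩ := hσv
        have hbK₂ : b ∈ spectrum ℂ T \ u := ⟨hbσ, fun hbu => hnot b ⟨hbσ, hbu, hbv'⟩⟩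
        rw [h0] at hbK₂
        exact hbK₂
      · have hcl₁ : IsClosed (spectrum ℂ T \ u) := (spectrum.isClosed T).sdiff hu
        have hcl₂ : IsClosed (spectrum ℂ T \ v) := (spectrum.isClosed T).sdiff hv
        have hcp₂ : IsCompact (spectrum ℂ T \ v) :=
          (spectrum.isCompact T).of_isClosed_subset hcl₂ Set.diff_subset
        have hdisj : Disjoint (spectrum ℂ T \ u) (spectrum ℂ T \ v) := by
          rw [Set.disjoint_left]
          rintro z ⟨hzσ, hzu⟩ ⟨_, hzv⟩
          exact (hcov hzσ).elim hzu hzv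
        have hσeq : spectrum ℂ T = (spectrum ℂ T \ u) ∪ (spectrum ℂ T \ v) := by
          ext z
          constructor
          · intro hz
            rcases hcov hz with h | h
            · exact Or.inr ⟨hz, fun hzv => hnot z ⟨hz, h, hzv⟩⟩
            · exact Or.inl ⟨hz, fun hzu => hnot z ⟨hz, hzu, h⟩⟩
          · rintro (⟨hz, -⟩ | ⟨hz, -⟩) <;> exact hz
        have hΩK₁ : Ω ⊆ spectrum ℂ T \ u :=
          fun w hw => ⟨hΩσ hw, fun hwu => hnot w ⟨hΩσ hw, hwu, hΩv hw⟩⟩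
        have h0 := CDaux.core Ω T hdens _ _ hcl₁ hcp₂ hdisj hσeq hΩK₁
        obtain ⟨b, hbσ, hbu'⟩ := hσu
        have hbK₂ : b ∈ spectrum ℂ T \ v := ⟨hbσ, fun hbv => hnot b ⟨hbσ, hbu', hbv⟩⟩
        rw [h0] at hbK₂
        exact hbK₂
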